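/- Define g^fg(α,γ,F*) = F*/(γ(1−α)) + (γ(1−α)−1)/(γ(1−α)) and g^rg(α,γ,F*) = F*·γ/(1+γα), for α ∈ [0,1), γ ∈ (0,1], F* ∈ [0,1]. If F* ≤ 1/2 then g^rg(α,γ,F*) ≥ g^fg(α,γ,F*) for all such α, γ. -/

import Mathlib

theorem stmt_6 (α γ Fstar : ℝ)
    (hα : 0 ≤ α ∧ α < 1) (hγ : 0 < γ ∧ γ ≤ 1)
    (hF : 0 ≤ Fstar ∧ Fstar ≤ 1) (hhalf : Fstar ≤ 1 / 2) :
    Fstar / (γ * (1 - α)) + (γ * (1 - α) - 1) / (γ * (1 - α))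
      ≤ Fstar * γ / (1 + γ * α) := by
  obtain ⟨hα0, hα1⟩ := hα
  obtain ⟨hγ0, hγ1⟩ := hγ
  obtain ⟨hF0, hF1⟩ := hF
  have hc : 0 < γ * (1 - α) := mul_pos hγ0 (by linarith)
  have hd : 0 < 1 + γ * α := by nlinarith
  rw [← add_div, div_le_div_iff₀ hc hd]
  nlinarith [sq_nonneg (1 - γ), mul_nonneg (mul_nonneg hγ0.le hα0) (sub_nonneg.2 hγ1),
    sq_nonneg (γ * α), mul_nonneg hγ0.le hα0]
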